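/- Let a, b, d, σ ∈ ℝ, let λ > 0 and m ∈ (0,1], and let C, S, D : ℝ → ℝ be differentiable functions satisfying the Jacobi cnoidal identities. Suppose the real numbers j0, j2, j4, k0, k2 satisfy the reduced coefficient system (coeffs 2 red). Then the functions η(ξ) = j0 + j2·C(ξ)² + j4·C(ξ)⁴ and w(ξ) = k0 + k2·C(ξ)² satisfy, for all ξ ∈ ℝ, the traveling-wave ODE system of the abcd-system with c = 0: −σ·η′(ξ) + w′(ξ) + (η·w)′(ξ) + a·w‴(ξ) + b·σ·η‴(ξ) = 0 and −σ·w′(ξ) + η′(ξ) + w(ξ)·w′(ξ) + d·σ·w‴(ξ) = 0. -/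

import Mathlib

/-- If the coefficients `j0,j2,j4,k0,k2` satisfy the reduced coefficient
system (coeffs 2 red), then the quartic cnoidal ansatz solves the traveling-wave ODE
system of the abcd-system with `c = 0`. -/
theorem abcd_cnoidal_quartic_solution_c_eq_zero
    (a b d σ lam m : ℝ) (hlam : 0 < lam) (hm : m ∈ Set.Ioc (0 : ℝ) 1)
    (C S D : ℝ → ℝ)
    (hC : Differentiable ℝ C) (hS : Differentiable ℝ S) (hD : Differentiable ℝ D)
    (hSid : ∀ ξ : ℝ, S ξ ^ 2 = 1 - C ξ ^ 2)
    (hDid : ∀ ξ : ℝ, D ξ ^ 2 = 1 - m ^ 2 + m ^ 2 * C ξ ^ 2)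
    (hC' : ∀ ξ : ℝ, deriv C ξ = -lam * S ξ * D ξ)
    (hS' : ∀ ξ : ℝ, deriv S ξ = lam * C ξ * D ξ)
    (hD' : ∀ ξ : ℝ, deriv D ξ = -m ^ 2 * lam * C ξ * S ξ)
    (j0 j2 j4 k0 k2 : ℝ)
    (hI : -6*j4*(20*b*lam^2*m^2*σ - k2) = 0)
    (hII : -24*b*lam^2*m^2*σ*j2 + 128*b*lam^2*m^2*σ*j4 - 24*a*lam^2*m^2*k2
        - 64*b*lam^2*σ*j4 - 4*σ*j4 + 4*j2*k2 + 4*j4*k0 = 0)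
    (hIII : 16*b*lam^2*m^2*σ*j2 - 24*b*lam^2*m^2*σ*j4 + 16*a*lam^2*m^2*k2
        - 8*b*lam^2*σ*j2 + 24*b*lam^2*σ*j4 - 8*a*lam^2*k2 - 2*σ*j2 + 2*j0*k2
        + 2*j2*k0 + 2*k2 = 0)
    (hIV : -24*d*lam^2*m^2*σ*k2 + 2*k2^2 + 4*j4 = 0)
    (hV : 16*d*lam^2*m^2*σ*k2 - 8*d*lam^2*σ*k2 - 2*σ*k2 + 2*k0*k2 + 2*j2 = 0)
    (η w : ℝ → ℝ)
    (hη : ∀ x : ℝ, η x = j0 + j2 * C x ^ 2 + j4 * C x ^ 4)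
    (hw : ∀ x : ℝ, w x = k0 + k2 * C x ^ 2) :
    ∀ ξ : ℝ,
      (-σ * deriv η ξ + deriv w ξ + deriv (fun x => η x * w x) ξ
        + a * deriv (deriv (deriv w)) ξ + b * σ * deriv (deriv (deriv η)) ξ = 0) ∧
      (-σ * deriv w ξ + deriv η ξ + w ξ * deriv w ξ
        + d * σ * deriv (deriv (deriv w)) ξ = 0) := by
  have hηe : η = fun x => j0 + j2 * C x ^ 2 + j4 * C x ^ 4 := funext hη
  have hwe : w = fun x => k0 + k2 * C x ^ 2 := funext hw
  have dC : ∀ x, HasDerivAt C (-lam * S x * D x) x := fun x => hC' x ▸ (hC x).hasDerivAt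
  have dS : ∀ x, HasDerivAt S (lam * C x * D x) x := fun x => hS' x ▸ (hS x).hasDerivAt
  have dD : ∀ x, HasDerivAt D (-m ^ 2 * lam * C x * S x) x := fun x => hD' x ▸ (hD x).hasDerivAt
  have hcongr : ∀ {f : ℝ → ℝ} {u v x : ℝ}, HasDerivAt f u x → u = v → HasDerivAt f v x :=
    fun h e => e ▸ h
  -- first derivative of η
  have dE0 : deriv η = fun x => (-2*lam*j2 - 4*lam*j4*C x^2) * (C x * S x * D x) := by
    funext x
    rw [hηe]
    refine (hcongr ((((((dC x).pow 2).const_mul j2).const_add j0).add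
      (((dC x).pow 4).const_mul j4))) ?_).deriv
    push_cast
    ring
  -- second derivative of η
  have dE1 : deriv (fun x => (-2*lam*j2 - 4*lam*j4*C x^2) * (C x * S x * D x))
      = fun x => lam^2 * ((2*j2 - 2*m^2*j2) + (12*j4 - 4*j2 - 12*m^2*j4 + 8*m^2*j2) * C x ^ 2
        + (-16*j4 + 32*m^2*j4 - 6*m^2*j2) * C x ^ 4 + (-20*m^2*j4) * C x ^ 6) := by
    funext x
    refine (hcongr (((((dC x).pow 2).const_mul (4*lam*j4)).const_sub (-2*lam*j2)).mul
      (((dC x).mul (dS x)).mul (dD x))) ?_).deriv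
    push_cast
    simp only [Pi.mul_apply, Pi.pow_apply]
    linear_combination (12*lam^2*j4*C x^2*D x^2 + 2*lam^2*j2*D x^2 + 4*lam^2*m^2*j4*C x^4
        + 2*lam^2*m^2*j2*C x^2) * hSid x
      + (12*lam^2*j4*C x^2 - 16*lam^2*j4*C x^4 + 2*lam^2*j2 - 4*lam^2*j2*C x^2) * hDid x
  -- first derivative of w
  have dW0 : deriv w = fun x => (-2*lam*k2) * (C x * S x * D x) := by
    funext x
    rw [hwe]
    refine (hcongr ((((dC x).pow 2).const_mul k2).const_add k0) ?_).deriv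
    push_cast
    ring
  -- second derivative of w
  have dW1 : deriv (fun x => (-2*lam*k2) * (C x * S x * D x))
      = fun x => lam^2 * ((2*k2 - 2*m^2*k2) + (-4*k2 + 8*m^2*k2) * C x ^ 2
        + (-6*m^2*k2) * C x ^ 4) := by
    funext x
    refine (hcongr ((((dC x).mul (dS x)).mul (dD x)).const_mul (-2*lam*k2)) ?_).deriv
    push_cast
    simp only [Pi.mul_apply, Pi.pow_apply]
    linear_combination (2*lam^2*k2*D x^2 + 2*lam^2*m^2*k2*C x^2) * hSid x
      + (2*lam^2*k2 - 4*lam^2*k2*C x^2) * hDid x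
  intro ξ
  -- third derivative of η at ξ
  have dE2 : deriv (fun x => lam^2 * ((2*j2 - 2*m^2*j2) + (12*j4 - 4*j2 - 12*m^2*j4 + 8*m^2*j2) * C x ^ 2
        + (-16*j4 + 32*m^2*j4 - 6*m^2*j2) * C x ^ 4 + (-20*m^2*j4) * C x ^ 6)) ξ
      = (lam^3 * ((8*j2 - 24*j4 + 24*m^2*j4 - 16*m^2*j2)
          + (64*j4 - 128*m^2*j4 + 24*m^2*j2) * C ξ ^ 2
          + (120*m^2*j4) * C ξ ^ 4)) * (C ξ * S ξ * D ξ) := by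
    have h1 := (((((dC ξ).pow 2).const_mul (12*j4 - 4*j2 - 12*m^2*j4 + 8*m^2*j2)).const_add
      (2*j2 - 2*m^2*j2)).add (((dC ξ).pow 4).const_mul (-16*j4 + 32*m^2*j4 - 6*m^2*j2))).add
      (((dC ξ).pow 6).const_mul (-20*m^2*j4))
    refine (hcongr (h1.const_mul (lam^2)) ?_).deriv
    push_cast
    ring
  -- third derivative of w at ξ
  have dW2 : deriv (fun x => lam^2 * ((2*k2 - 2*m^2*k2) + (-4*k2 + 8*m^2*k2) * C x ^ 2
        + (-6*m^2*k2) * C x ^ 4)) ξ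
      = (lam^3 * ((8*k2 - 16*m^2*k2) + (24*m^2*k2) * C ξ ^ 2)) * (C ξ * S ξ * D ξ) := by
    have h1 := ((((dC ξ).pow 2).const_mul (-4*k2 + 8*m^2*k2)).const_add
      (2*k2 - 2*m^2*k2)).add (((dC ξ).pow 4).const_mul (-6*m^2*k2))
    refine (hcongr (h1.const_mul (lam^2)) ?_).deriv
    push_cast
    ring
  -- derivative of η * w at ξ
  have dEW : deriv (fun x => η x * w x) ξ
      = ((-2*lam*j2 - 4*lam*j4*C ξ^2) * (C ξ * S ξ * D ξ)) * (k0 + k2 * C ξ ^ 2)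
        + (j0 + j2 * C ξ ^ 2 + j4 * C ξ ^ 4) * ((-2*lam*k2) * (C ξ * S ξ * D ξ)) := by
    have hη' : HasDerivAt η ((-2*lam*j2 - 4*lam*j4*C ξ^2) * (C ξ * S ξ * D ξ)) ξ := by
      rw [hηe]
      exact hcongr ((((((dC ξ).pow 2).const_mul j2).const_add j0).add
        (((dC ξ).pow 4).const_mul j4))) (by push_cast; ring)
    have hw' : HasDerivAt w ((-2*lam*k2) * (C ξ * S ξ * D ξ)) ξ := by
      rw [hwe]
      exact hcongr ((((dC ξ).pow 2).const_mul k2).const_add k0) (by push_cast; ring)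
    have := (hη'.mul hw').deriv
    rw [show (fun x => η x * w x) = η * w from rfl, this, hη ξ, hw ξ]
  constructor
  · rw [dE0, dW0, dEW, dE1, dW1, dE2, dW2]
    linear_combination (-lam*C ξ*S ξ*D ξ) * hIII + (-lam*C ξ^3*S ξ*D ξ) * hII
      + (-lam*C ξ^5*S ξ*D ξ) * hI
  · rw [dE0, dW0, dW1, dW2, hw ξ]
    linear_combination (-lam*C ξ*S ξ*D ξ) * hV + (-lam*C ξ^3*S ξ*D ξ) * hIV
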